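/- For every n ≥ 0, the number of permutations of {1,…,n} avoiding the pattern 132 equals the n-th Catalan number. -/
import Mathlib


/-- A Dyck word of semilength `n`, as a list of booleans read left to right,
where `true` is an up-step `U` and `false` is a down-step `D`:
exactly `n` of each letter, and every prefix has at least as many `U`'s as `D`'s. -/
def IsDyckWord (n : ℕ) (w : List Bool) : Prop :=
  w.count true = n ∧ w.count false = n ∧
    ∀ k : ℕ, (w.take k).count false ≤ (w.take k).count true

/-- The number of peaks of a word: positions where a `U` is immediately followed by a `D`. -/
def numPeaks (w : List Bool) : ℕ := (w.zip w.tail).count (true, false)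

/-- The word `U^a D^b`. -/
def upDown (a b : ℕ) : List Bool :=
  List.replicate a true ++ List.replicate b false

/-- A permutation `π` of `{0, …, n-1}` contains the pattern `σ` (a permutation of
`{0, …, m-1}`) if some subsequence of values of `π` is in the same relative order as `σ`. -/
def ContainsPattern {n m : ℕ} (π : Equiv.Perm (Fin n)) (σ : Equiv.Perm (Fin m)) : Prop :=
  ∃ f : Fin m → Fin n, StrictMono f ∧ ∀ a b : Fin m, π (f a) < π (f b) ↔ σ a < σ b

/-- A permutation avoids a pattern if it does not contain it. -/
def AvoidsPattern {n m : ℕ} (π : Equiv.Perm (Fin n)) (σ : Equiv.Perm (Fin m)) : Prop :=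
  ¬ ContainsPattern π σ

/-- The pattern 132 (0-indexed: 021). -/
def pat132 : Equiv.Perm (Fin 3) where
  toFun := ![0, 2, 1]
  invFun := ![0, 2, 1]
  left_inv := by intro x; fin_cases x <;> rfl
  right_inv := by intro x; fin_cases x <;> rfl

/-- The pattern 321 (0-indexed: 210). -/
def pat321 : Equiv.Perm (Fin 3) where
  toFun := ![2, 1, 0]
  invFun := ![2, 1, 0]
  left_inv := by intro x; fin_cases x <;> rfl
  right_inv := by intro x; fin_cases x <;> rfl

/-- The pattern 4321 (0-indexed: 3210). -/
def pat4321 : Equiv.Perm (Fin 4) where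
  toFun := ![3, 2, 1, 0]
  invFun := ![3, 2, 1, 0]
  left_inv := by intro x; fin_cases x <;> rfl
  right_inv := by intro x; fin_cases x <;> rfl

/-- The pattern 4231 (0-indexed: 3120). -/
def pat4231 : Equiv.Perm (Fin 4) where
  toFun := ![3, 1, 2, 0]
  invFun := ![3, 1, 2, 0]
  left_inv := by intro x; fin_cases x <;> rfl
  right_inv := by intro x; fin_cases x <;> rfl

/-- The strictly decreasing pattern `(k+1)k⋯21` of length `k+1`. -/
def patDesc (k : ℕ) : Equiv.Perm (Fin (k+1)) where
  toFun := Fin.rev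
  invFun := Fin.rev
  left_inv := Fin.rev_rev
  right_inv := Fin.rev_rev

/-- `w` has exactly three peaks and, in its (unique) decomposition
`U^{a₁}D^{b₁}U^{a₂}D^{b₂}U^{a₃}D^{b₃}` with all exponents positive,
`a₂ = 1` or `b₂ = 1`. -/
def ThreePeakMiddleOne (w : List Bool) : Prop :=
  numPeaks w = 3 ∧ ∃ a₁ b₁ a₂ b₂ a₃ b₃ : ℕ,
    0 < a₁ ∧ 0 < b₁ ∧ 0 < a₂ ∧ 0 < b₂ ∧ 0 < a₃ ∧ 0 < b₃ ∧
    w = upDown a₁ b₁ ++ upDown a₂ b₂ ++ upDown a₃ b₃ ∧ (a₂ = 1 ∨ b₂ = 1)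

/-- `i` is (the position of) a left-to-right minimum of `π`. -/
def IsLtrMin {n : ℕ} (π : Equiv.Perm (Fin n)) (i : Fin n) : Prop :=
  ∀ j : Fin n, j < i → π i < π j

lemma contains132_iff {n : ℕ} (π : Equiv.Perm (Fin n)) :
    ContainsPattern π pat132 ↔
      ∃ i j k : Fin n, i < j ∧ j < k ∧ π i < π k ∧ π k < π j := by
  constructor
  · rintro ⟨f, hf, hval⟩
    exact ⟨f 0, f 1, f 2, hf (by decide), hf (by decide),
      (hval 0 2).2 (by decide), (hval 2 1).2 (by decide)⟩
  · rintro ⟨i, j, k, hij, hjk, h1, h2⟩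
    refine ⟨![i, j, k], ?_, ?_⟩
    · intro a b hab
      fin_cases a <;> fin_cases b <;> simp_all <;> omega
    · intro a b
      have h3 : π i < π j := h1.trans h2
      fin_cases a <;> fin_cases b <;>
        simp [pat132, Equiv.coe_fn_mk] <;> omega

def glueFun {n k : ℕ} (hk : k ≤ n) (σ : Equiv.Perm (Fin k)) (τ : Equiv.Perm (Fin (n - k))) :
    Fin (n+1) → Fin (n+1) := fun i =>
  if h : i.val < k then ⟨(n - k) + (σ ⟨i.val, h⟩).val, by
    have := (σ ⟨i.val, h⟩).isLt; omega⟩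
  else if h2 : i.val = k then ⟨n, by omega⟩
  else ⟨(τ ⟨i.val - (k+1), by have := i.isLt; omega⟩).val, by
    have h3 := (τ ⟨i.val - (k+1), by have := i.isLt; omega⟩).isLt; omega⟩

lemma glueFun_inj {n k : ℕ} (hk : k ≤ n) (σ : Equiv.Perm (Fin k)) (τ : Equiv.Perm (Fin (n - k))) :
    Function.Injective (glueFun hk σ τ) := by
  intro i j hij
  unfold glueFun at hij
  have hi := i.isLt; have hj := j.isLt
  split_ifs at hij with h1 h2 h3 h4 h5 h6 h7 h8 h9 <;>
    simp only [Fin.mk.injEq] at hij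
  · have hs : (σ ⟨i.val, h1⟩).val = (σ ⟨j.val, h2⟩).val := by omega
    have := congrArg Fin.val (σ.injective (Fin.ext hs))
    simp only at this
    exact Fin.ext this
  · have := (σ ⟨i.val, h1⟩).isLt
    omega
  · have := (σ ⟨i.val, h1⟩).isLt
    have ht := (τ ⟨j.val - (k+1), by omega⟩).isLt
    omega
  · have := (σ ⟨j.val, h5⟩).isLt
    omega
  · exact Fin.ext (by omega)
  · have := (τ ⟨j.val - (k+1), by omega⟩).isLt
    omega
  · have := (σ ⟨j.val, h7⟩).isLt
    have ht := (τ ⟨i.val - (k+1), by omega⟩).isLt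
    omega
  · have := (τ ⟨i.val - (k+1), by omega⟩).isLt
    omega
  · have hs : (τ ⟨i.val - (k+1), by omega⟩).val = (τ ⟨j.val - (k+1), by omega⟩).val := by omega
    have := congrArg Fin.val (τ.injective (Fin.ext hs))
    simp only at this
    exact Fin.ext (by omega)

noncomputable def glue {n k : ℕ} (hk : k ≤ n) (σ : Equiv.Perm (Fin k)) (τ : Equiv.Perm (Fin (n - k))) :
    Equiv.Perm (Fin (n+1)) :=
  Equiv.ofBijective _ (Finite.injective_iff_bijective.mp (glueFun_inj hk σ τ))

lemma glue_apply_lt {n k : ℕ} (hk : k ≤ n) (σ : Equiv.Perm (Fin k)) (τ : Equiv.Perm (Fin (n - k)))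
    {i : Fin (n+1)} (h : i.val < k) :
    (glue hk σ τ i).val = (n - k) + (σ ⟨i.val, h⟩).val := by
  simp only [glue, Equiv.ofBijective_apply, glueFun, dif_pos h]

lemma glue_apply_eq {n k : ℕ} (hk : k ≤ n) (σ : Equiv.Perm (Fin k)) (τ : Equiv.Perm (Fin (n - k)))
    {i : Fin (n+1)} (h : i.val = k) :
    (glue hk σ τ i).val = n := by
  simp only [glue, Equiv.ofBijective_apply, glueFun, dif_neg (by omega : ¬ i.val < k), dif_pos h]

lemma glue_apply_gt {n k : ℕ} (hk : k ≤ n) (σ : Equiv.Perm (Fin k)) (τ : Equiv.Perm (Fin (n - k)))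
    {i : Fin (n+1)} (h : k < i.val) :
    (glue hk σ τ i).val = (τ ⟨i.val - (k+1), by have := i.isLt; omega⟩).val := by
  simp only [glue, Equiv.ofBijective_apply, glueFun, dif_neg (by omega : ¬ i.val < k),
    dif_neg (by omega : ¬ i.val = k)]

lemma glue_avoids {n k : ℕ} (hk : k ≤ n) (σ : Equiv.Perm (Fin k)) (τ : Equiv.Perm (Fin (n - k)))
    (hσ : AvoidsPattern σ pat132) (hτ : AvoidsPattern τ pat132) :
    AvoidsPattern (glue hk σ τ) pat132 := by
  intro hcon
  rw [contains132_iff] at hcon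
  obtain ⟨i, j, l, hij, hjl, h1, h2⟩ := hcon
  rw [Fin.lt_def] at hij hjl h1 h2
  have hi := i.isLt; have hj := j.isLt; have hl := l.isLt
  rcases lt_trichotomy l.val k with hlk | hlk | hlk
  · -- all three positions < k : pattern lives in σ
    have hik : i.val < k := by omega
    have hjk2 : j.val < k := by omega
    have e1 := glue_apply_lt hk σ τ hik
    have e2 := glue_apply_lt hk σ τ hjk2
    have e3 := glue_apply_lt hk σ τ hlk
    apply hσ
    rw [contains132_iff]
    refine ⟨⟨i.val, hik⟩, ⟨j.val, hjk2⟩, ⟨l.val, hlk⟩, ?_, ?_, ?_, ?_⟩ <;>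
      · simp only [Fin.lt_def, Fin.val_mk]; omega
  · -- middle: glue at l equals n, but something is above it
    have e3 := glue_apply_eq hk σ τ hlk
    have := (glue hk σ τ j).isLt
    omega
  · rcases lt_trichotomy i.val k with hik | hik | hik
    · -- i left of k, l right of k : value at i is ≥ n-k > value at l
      have e1 := glue_apply_lt hk σ τ hik
      have e3 := glue_apply_gt hk σ τ hlk
      have := (τ ⟨l.val - (k+1), by omega⟩).isLt
      omega
    · have e1 := glue_apply_eq hk σ τ hik
      have := (glue hk σ τ l).isLt
      omega
    · -- all three positions > k : pattern lives in τ
      have hjk2 : k < j.val := by omega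
      have e1 := glue_apply_gt hk σ τ hik
      have e2 := glue_apply_gt hk σ τ hjk2
      have e3 := glue_apply_gt hk σ τ hlk
      apply hτ
      rw [contains132_iff]
      refine ⟨⟨i.val - (k+1), by omega⟩, ⟨j.val - (k+1), by omega⟩,
        ⟨l.val - (k+1), by omega⟩, ?_, ?_, ?_, ?_⟩ <;>
        · simp only [Fin.lt_def, Fin.val_mk]; omega

section Decomp

variable {n : ℕ} (π : Equiv.Perm (Fin (n+1))) (hπ : AvoidsPattern π pat132)

/-- Position of the maximum value. -/
noncomputable def maxPos : Fin (n+1) := π.symm ⟨n, Nat.lt_succ_self n⟩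

lemma pi_maxPos : π (maxPos π) = ⟨n, Nat.lt_succ_self n⟩ := Equiv.apply_symm_apply _ _

include hπ in
lemma cross (i j : Fin (n+1)) (hi : i.val < (maxPos π).val) (hj : (maxPos π).val < j.val) :
    π j < π i := by
  by_contra hcon
  have hne : π i ≠ π j := fun h => by
    have := π.injective h; rw [this] at hi; omega
  have hlt : π i < π j := lt_of_le_of_ne (not_lt.mp hcon) hne
  have hjn : (π j).val < n := by
    have hle : (π j).val ≤ n := by have := (π j).isLt; omega
    rcases lt_or_eq_of_le hle with h | h
    · exact h
    · exfalso
      have : π j = π (maxPos π) := by rw [pi_maxPos]; exact Fin.ext h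
      have := π.injective this
      rw [this] at hj; omega
  apply hπ
  rw [contains132_iff]
  refine ⟨i, maxPos π, j, ?_, ?_, hlt, ?_⟩
  · exact Fin.lt_def.mpr hi
  · exact Fin.lt_def.mpr hj
  · rw [pi_maxPos]; exact Fin.lt_def.mpr hjn

include hπ in
lemma right_small (j : Fin (n+1)) (hj : (maxPos π).val < j.val) :
    (π j).val < n - (maxPos π).val := by
  classical
  set K := maxPos π with hK
  have hjn : π j ≠ π K := fun h => by
    have := π.injective h; rw [this] at hj; omega
  have hjn' : (π j).val < n := by
    have := (π j).isLt
    have : (π j).val ≠ n := fun h => hjn (by rw [pi_maxPos]; exact Fin.ext h)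
    omega
  have hsub : (Finset.Iic K).image π ⊆ Finset.Ioi (π j) := by
    intro v hv
    simp only [Finset.mem_image, Finset.mem_Iic] at hv
    obtain ⟨i, hi, rfl⟩ := hv
    rw [Finset.mem_Ioi]
    rcases lt_or_eq_of_le hi with h | h
    · exact cross π hπ i j (Fin.lt_def.mp h) hj
    · rw [h, pi_maxPos]
      exact Fin.lt_def.mpr (by simpa using hjn')
  have hcard : ((Finset.Iic K).image π).card = K.val + 1 := by
    rw [Finset.card_image_of_injective _ π.injective, Fin.card_Iic]
  have := Finset.card_le_card hsub
  rw [hcard, Fin.card_Ioi] at this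
  omega

include hπ in
lemma left_big (i : Fin (n+1)) (hi : i.val < (maxPos π).val) :
    n - (maxPos π).val ≤ (π i).val := by
  classical
  set K := maxPos π with hK
  have hsub : (Finset.Ioi K).image π ⊆ Finset.Iio (π i) := by
    intro v hv
    simp only [Finset.mem_image, Finset.mem_Ioi] at hv
    obtain ⟨j, hj, rfl⟩ := hv
    rw [Finset.mem_Iio]
    exact cross π hπ i j hi (Fin.lt_def.mp hj)
  have hcard : ((Finset.Ioi K).image π).card = n - K.val := by
    rw [Finset.card_image_of_injective _ π.injective, Fin.card_Ioi]; omega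
  have := Finset.card_le_card hsub
  rw [hcard, Fin.card_Iio] at this
  exact this

lemma hkle : (maxPos π).val ≤ n := by have := (maxPos π).isLt; omega

lemma pos_ne_max {i : Fin (n+1)} (h : i.val ≠ (maxPos π).val) : (π i).val ≠ n := by
  intro hcon
  have : π i = π (maxPos π) := by rw [pi_maxPos]; exact Fin.ext hcon
  exact h (congrArg Fin.val (π.injective this))

noncomputable def leftFun : Fin (maxPos π).val → Fin (maxPos π).val := fun a =>
  ⟨(π ⟨a.val, by have := a.isLt; have := hkle π; omega⟩).val - (n - (maxPos π).val), by
    have ha := a.isLt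
    have h1 := pos_ne_max π (i := ⟨a.val, by have := hkle π; omega⟩) (by simpa using by omega)
    have h2 := (π ⟨a.val, by have := hkle π; omega⟩).isLt
    have := hkle π
    omega⟩

include hπ in
lemma leftFun_inj : Function.Injective (leftFun π) := by
  intro a b hab
  have ha := a.isLt; have hb := b.isLt
  have hA := left_big π hπ ⟨a.val, by have := hkle π; omega⟩ (by simpa using ha)
  have hB := left_big π hπ ⟨b.val, by have := hkle π; omega⟩ (by simpa using hb)
  have hv : (π ⟨a.val, by have := hkle π; omega⟩).val
      = (π ⟨b.val, by have := hkle π; omega⟩).val := by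
    have := congrArg Fin.val hab
    simp only [leftFun] at this
    omega
  have := π.injective (Fin.ext hv)
  exact Fin.ext (by simpa using congrArg Fin.val this)

noncomputable def leftPerm : Equiv.Perm (Fin (maxPos π).val) :=
  Equiv.ofBijective _ (Finite.injective_iff_bijective.mp (leftFun_inj π hπ))

noncomputable def rightFun : Fin (n - (maxPos π).val) → Fin (n - (maxPos π).val) := fun b =>
  ⟨(π ⟨(maxPos π).val + 1 + b.val, by have := b.isLt; have := hkle π; omega⟩).val, by
    exact right_small π hπ _ (by simp; omega)⟩

lemma rightFun_inj : Function.Injective (rightFun π hπ) := by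
  intro a b hab
  have hv : (π ⟨(maxPos π).val + 1 + a.val, by have := a.isLt; have := hkle π; omega⟩).val
      = (π ⟨(maxPos π).val + 1 + b.val, by have := b.isLt; have := hkle π; omega⟩).val := by
    have := congrArg Fin.val hab
    simpa [rightFun] using this
  have := π.injective (Fin.ext hv)
  exact Fin.ext (by have := congrArg Fin.val this; simp at this; omega)

noncomputable def rightPerm : Equiv.Perm (Fin (n - (maxPos π).val)) :=
  Equiv.ofBijective _ (Finite.injective_iff_bijective.mp (rightFun_inj π hπ))

include hπ in
lemma glue_decomp : glue (hkle π) (leftPerm π hπ) (rightPerm π hπ) = π := by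
  apply Equiv.ext
  intro i
  apply Fin.ext
  have hi := i.isLt
  rcases lt_trichotomy i.val (maxPos π).val with h | h | h
  · rw [glue_apply_lt (hkle π) _ _ h]
    have : (leftPerm π hπ ⟨i.val, h⟩).val
        = (π ⟨i.val, by have := hkle π; omega⟩).val - (n - (maxPos π).val) := rfl
    rw [this]
    have hA := left_big π hπ ⟨i.val, by have := hkle π; omega⟩ h
    have : π ⟨i.val, by have := hkle π; omega⟩ = π i :=
      congrArg (fun x => π x) (Fin.ext rfl)
    rw [this] at hA ⊢
    omega
  · rw [glue_apply_eq (hkle π) _ _ h]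
    have : i = maxPos π := Fin.ext h
    rw [this, pi_maxPos]
  · rw [glue_apply_gt (hkle π) _ _ h]
    have : (rightPerm π hπ ⟨i.val - ((maxPos π).val + 1), by have := hkle π; omega⟩).val
        = (π ⟨(maxPos π).val + 1 + (i.val - ((maxPos π).val + 1)),
            by have := hkle π; omega⟩).val := rfl
    rw [this]
    have harg : (⟨(maxPos π).val + 1 + (i.val - ((maxPos π).val + 1)),
        by have := hkle π; omega⟩ : Fin (n+1)) = i := Fin.ext (by simp only [Fin.val_mk]; omega)
    rw [harg]

include hπ in
lemma leftPerm_avoids : AvoidsPattern (leftPerm π hπ) pat132 := by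
  intro hcon
  rw [contains132_iff] at hcon
  obtain ⟨a, b, c, hab, hbc, h1, h2⟩ := hcon
  rw [Fin.lt_def] at hab hbc h1 h2
  have ha := a.isLt; have hb := b.isLt; have hc := c.isLt
  have hA := left_big π hπ ⟨a.val, by have := hkle π; omega⟩ (by simpa using ha)
  have hB := left_big π hπ ⟨b.val, by have := hkle π; omega⟩ (by simpa using hb)
  have hC := left_big π hπ ⟨c.val, by have := hkle π; omega⟩ (by simpa using hc)
  have e1 : (leftPerm π hπ a).val
      = (π ⟨a.val, by have := hkle π; omega⟩).val - (n - (maxPos π).val) := rfl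
  have e2 : (leftPerm π hπ b).val
      = (π ⟨b.val, by have := hkle π; omega⟩).val - (n - (maxPos π).val) := rfl
  have e3 : (leftPerm π hπ c).val
      = (π ⟨c.val, by have := hkle π; omega⟩).val - (n - (maxPos π).val) := rfl
  apply hπ
  rw [contains132_iff]
  refine ⟨⟨a.val, by have := hkle π; omega⟩, ⟨b.val, by have := hkle π; omega⟩,
    ⟨c.val, by have := hkle π; omega⟩, ?_, ?_, ?_, ?_⟩ <;>
    · simp only [Fin.lt_def, Fin.val_mk]; omega

include hπ in
lemma rightPerm_avoids : AvoidsPattern (rightPerm π hπ) pat132 := by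
  intro hcon
  rw [contains132_iff] at hcon
  obtain ⟨a, b, c, hab, hbc, h1, h2⟩ := hcon
  rw [Fin.lt_def] at hab hbc h1 h2
  have ha := a.isLt; have hb := b.isLt; have hc := c.isLt
  have e1 : (rightPerm π hπ a).val
      = (π ⟨(maxPos π).val + 1 + a.val, by have := hkle π; omega⟩).val := rfl
  have e2 : (rightPerm π hπ b).val
      = (π ⟨(maxPos π).val + 1 + b.val, by have := hkle π; omega⟩).val := rfl
  have e3 : (rightPerm π hπ c).val
      = (π ⟨(maxPos π).val + 1 + c.val, by have := hkle π; omega⟩).val := rfl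
  apply hπ
  rw [contains132_iff]
  refine ⟨⟨(maxPos π).val + 1 + a.val, by have := hkle π; omega⟩,
    ⟨(maxPos π).val + 1 + b.val, by have := hkle π; omega⟩,
    ⟨(maxPos π).val + 1 + c.val, by have := hkle π; omega⟩, ?_, ?_, ?_, ?_⟩ <;>
    · simp only [Fin.lt_def, Fin.val_mk]; omega

end Decomp

def Av (n : ℕ) := {π : Equiv.Perm (Fin n) // AvoidsPattern π pat132}

instance (n : ℕ) : Finite (Av n) := by unfold Av; infer_instance

noncomputable def Phi (n : ℕ) : (Σ k : Fin (n+1), Av k.val × Av (n - k.val)) → Av (n+1) :=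
  fun x => ⟨glue (Nat.lt_succ_iff.mp x.1.isLt) x.2.1.1 x.2.2.1,
    glue_avoids _ _ _ x.2.1.2 x.2.2.2⟩

lemma Phi_bij (n : ℕ) : Function.Bijective (Phi n) := by
  constructor
  · rintro ⟨k, ⟨σ, hσ⟩, ⟨τ, hτ⟩⟩ ⟨k', ⟨σ', hσ'⟩, ⟨τ', hτ'⟩⟩ h
    have hg : glue (Nat.lt_succ_iff.mp k.isLt) σ τ
        = glue (Nat.lt_succ_iff.mp k'.isLt) σ' τ' := congrArg Subtype.val h
    have hkn := Nat.lt_succ_iff.mp k.isLt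
    have hkn' := Nat.lt_succ_iff.mp k'.isLt
    -- k = k'
    have hkk : k = k' := by
      by_contra hne
      have h1 : (glue (Nat.lt_succ_iff.mp k.isLt) σ τ ⟨k.val, k.isLt⟩).val = n :=
        glue_apply_eq _ _ _ rfl
      rw [hg] at h1
      rcases lt_trichotomy k.val k'.val with hc | hc | hc
      · rw [glue_apply_lt (Nat.lt_succ_iff.mp k'.isLt) σ' τ' hc] at h1
        have := (σ' ⟨k.val, hc⟩).isLt
        omega
      · exact hne (Fin.ext hc)
      · rw [glue_apply_gt (Nat.lt_succ_iff.mp k'.isLt) σ' τ' hc] at h1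
        have := (τ' ⟨k.val - (k'.val + 1), by omega⟩).isLt
        omega
    subst hkk
    -- σ = σ'
    have hσσ : σ = σ' := by
      apply Equiv.ext
      intro a
      have ha := a.isLt
      have e1 : (glue (Nat.lt_succ_iff.mp k.isLt) σ τ ⟨a.val, by omega⟩).val
          = (n - k.val) + (σ ⟨a.val, ha⟩).val := glue_apply_lt _ _ _ ha
      have e2 : (glue (Nat.lt_succ_iff.mp k.isLt) σ' τ' ⟨a.val, by omega⟩).val
          = (n - k.val) + (σ' ⟨a.val, ha⟩).val := glue_apply_lt _ _ _ ha
      rw [hg] at e1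
      have : σ ⟨a.val, ha⟩ = σ' ⟨a.val, ha⟩ := Fin.ext (by omega)
      have h2 : (⟨a.val, ha⟩ : Fin k.val) = a := Fin.ext rfl
      rwa [h2] at this
    -- τ = τ'
    have hττ : τ = τ' := by
      apply Equiv.ext
      intro b
      have hb := b.isLt
      have hpos : k.val < k.val + 1 + b.val := by omega
      have e1 : (glue (Nat.lt_succ_iff.mp k.isLt) σ τ ⟨k.val + 1 + b.val, by omega⟩).val
          = (τ ⟨k.val + 1 + b.val - (k.val + 1), by omega⟩).val := glue_apply_gt _ _ _ hpos
      have e2 : (glue (Nat.lt_succ_iff.mp k.isLt) σ' τ' ⟨k.val + 1 + b.val, by omega⟩).val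
          = (τ' ⟨k.val + 1 + b.val - (k.val + 1), by omega⟩).val := glue_apply_gt _ _ _ hpos
      rw [hg] at e1
      have harg : (⟨k.val + 1 + b.val - (k.val + 1), by omega⟩ : Fin (n - k.val)) = b :=
        Fin.ext (by simp only [Fin.val_mk]; omega)
      rw [harg] at e1 e2
      exact Fin.ext (by omega)
    subst hσσ; subst hττ
    rfl
  · rintro ⟨π, hπ⟩
    refine ⟨⟨maxPos π, ⟨leftPerm π hπ, leftPerm_avoids π hπ⟩,
      ⟨rightPerm π hπ, rightPerm_avoids π hπ⟩⟩, ?_⟩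
    apply Subtype.ext
    exact glue_decomp π hπ

lemma card_Av_succ (n : ℕ) :
    Nat.card (Av (n+1)) = ∑ k : Fin (n+1), Nat.card (Av k.val) * Nat.card (Av (n - k.val)) := by
  classical
  letI : ∀ m : ℕ, Fintype (Av m) := fun m => Fintype.ofFinite _
  rw [← Nat.card_eq_of_bijective _ (Phi_bij n)]
  rw [Nat.card_eq_fintype_card, Fintype.card_sigma]
  apply Finset.sum_congr rfl
  intro k _
  rw [Fintype.card_prod, Nat.card_eq_fintype_card, Nat.card_eq_fintype_card]

lemma card_Av_zero : Nat.card (Av 0) = 1 := by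
  have e : Av 0 ≃ Equiv.Perm (Fin 0) :=
    Equiv.subtypeUnivEquiv (fun π => fun ⟨f, hf, hv⟩ => (f 0).elim0)
  rw [Nat.card_congr e, Nat.card_eq_fintype_card]
  simp

/-- For every `n ≥ 0`, the number of permutations of `{1, …, n}` avoiding the
pattern 132 equals the `n`-th Catalan number. -/
theorem avoid_132_count_eq_catalan (n : ℕ) :
    Nat.card {π : Equiv.Perm (Fin n) // AvoidsPattern π pat132} = catalan n := by
  induction n using Nat.strong_induction_on with
  | _ n ih =>
    match n, ih with
    | 0, _ =>
      show Nat.card (Av 0) = catalan 0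
      rw [catalan_zero]; exact card_Av_zero
    | (m+1), ih =>
      show Nat.card (Av (m+1)) = _
      rw [card_Av_succ m, catalan_succ]
      apply Finset.sum_congr rfl
      intro k _
      rw [show Nat.card (Av k.val) = catalan k.val from ih k.val (by omega),
        show Nat.card (Av (m - k.val)) = catalan (m - k.val) from ih (m - k.val) (by omega)]
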